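/- Let X be a DI T0 space. Then for all x, y ∈ X, x ≪_I y if and only if x ≪ y in the specialisation poset of X (where ≪ is the usual way-below relation defined via directed sets). Consequently, X is I-continuous if and only if its specialisation poset is continuous, i.e., for every y ∈ X the set {x | x ≪ y} is directed and y is its least upper bound. -/
import Mathlib


universe u

/-- The specialisation order of a topological space: `x ≤ y` iff `x ∈ closure {y}`. -/
def sle {X : Type u} [TopologicalSpace X] (x y : X) : Prop :=
  x ∈ closure ({y} : Set X)

/-- Upper bounds with respect to the specialisation order. -/
def sUB {X : Type u} [TopologicalSpace X] (A : Set X) : Set X :=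
  {u | ∀ a ∈ A, sle a u}

/-- `s` is the least upper bound of `A` with respect to the specialisation order. -/
def sIsLUB {X : Type u} [TopologicalSpace X] (A : Set X) (s : X) : Prop :=
  s ∈ sUB A ∧ ∀ u ∈ sUB A, sle s u

/-- `x ≪_I y`: for every irreducible set `E` having a supremum above `y`,
some element of `E` is above `x`. -/
def IBelow {X : Type u} [TopologicalSpace X] (x y : X) : Prop :=
  ∀ E : Set X, IsIrreducible E → ∀ s : X, sIsLUB E s → sle y s → ∃ e ∈ E, sle x e

/-- `X` is I-continuous: for every `y`, the set `↡_I y` is irreducible with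
least upper bound `y`. -/
def IContinuous (X : Type u) [TopologicalSpace X] : Prop :=
  ∀ y : X, IsIrreducible {x | IBelow x y} ∧ sIsLUB {x | IBelow x y} y

/-- `X` is I-stable: `↟_I U` is open for every open `U`. -/
def IStable (X : Type u) [TopologicalSpace X] : Prop :=
  ∀ U : Set X, IsOpen U → IsOpen {x : X | ∃ a ∈ U, IBelow a x}

/-- `X` is sup-sober: every closed irreducible set with a supremum is the closure
of that supremum. -/
def SupSober (X : Type u) [TopologicalSpace X] : Prop :=
  ∀ F : Set X, IsClosed F → IsIrreducible F → ∀ s : X, sIsLUB F s → F = closure ({s} : Set X)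

/-- The collection σ_I: upper sets (w.r.t. specialisation) inaccessible by suprema of
irreducible sets. -/
def sigmaI (X : Type u) [TopologicalSpace X] : Set (Set X) :=
  {U | (∀ a ∈ U, ∀ b : X, sle a b → b ∈ U) ∧
       ∀ E : Set X, IsIrreducible E → ∀ s : X, sIsLUB E s → s ∈ U → (U ∩ E).Nonempty}

/-- The irreducibly derived topology τ_SI: open sets inaccessible by suprema of
irreducible sets. -/
def tauSI (X : Type u) [TopologicalSpace X] : Set (Set X) :=
  {U | IsOpen U ∧ ∀ E : Set X, IsIrreducible E → ∀ s : X, sIsLUB E s → s ∈ U → (E ∩ U).Nonempty}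

/-- The net `x` I-converges to `y`: there is an irreducible set `E` with a supremum above `y`,
all of whose elements are eventual lower bounds of the net. -/
def IConv {X : Type u} [TopologicalSpace X] {ι : Type u} [Preorder ι]
    (x : ι → X) (y : X) : Prop :=
  ∃ E : Set X, IsIrreducible E ∧
    (∀ e ∈ E, ∃ i₀ : ι, ∀ i : ι, i₀ ≤ i → sle e (x i)) ∧
    ∃ s : X, sIsLUB E s ∧ sle y s

/-- `D` is directed with respect to the specialisation order. -/
def sDirectedOn {X : Type u} [TopologicalSpace X] (D : Set X) : Prop :=
  ∀ a ∈ D, ∀ b ∈ D, ∃ c ∈ D, sle a c ∧ sle b c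

/-- Way-below in the specialisation poset, via nonempty directed sets. -/
def sWayBelow {X : Type u} [TopologicalSpace X] (x y : X) : Prop :=
  ∀ D : Set X, D.Nonempty → sDirectedOn D → ∀ s : X, sIsLUB D s → sle y s → ∃ d ∈ D, sle x d

/-- `X` is a DI space: the supremum of any irreducible set is also attained as the supremum
of a nonempty directed subset of its lower closure. -/
def DISpace (X : Type u) [TopologicalSpace X] : Prop :=
  ∀ E : Set X, IsIrreducible E → ∀ s : X, sIsLUB E s →
    ∃ D : Set X, D.Nonempty ∧ sDirectedOn D ∧ (∀ d ∈ D, ∃ e ∈ E, sle d e) ∧ sIsLUB D s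

/-- `U` is τ_I-open: every net that I-converges to a point of `U` is eventually in `U`. -/
def TauIOpen {X : Type u} [TopologicalSpace X] (U : Set X) : Prop :=
  ∀ (ι : Type u) [Preorder ι] [Nonempty ι],
    (∀ i j : ι, ∃ k : ι, i ≤ k ∧ j ≤ k) →
    ∀ x : ι → X, ∀ y ∈ U, IConv x y →
    ∃ i₀ : ι, ∀ i : ι, i₀ ≤ i → x i ∈ U

lemma sle_refl' {X : Type u} [TopologicalSpace X] (x : X) : sle x x :=
  subset_closure rfl

lemma sle_trans' {X : Type u} [TopologicalSpace X] {x y z : X}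
    (h1 : sle x y) (h2 : sle y z) : sle x z := by
  have h : closure ({y} : Set X) ⊆ closure ({z} : Set X) :=
    closure_minimal (Set.singleton_subset_iff.2 h2) isClosed_closure
  exact h h1

lemma open_mem_of_sle' {X : Type u} [TopologicalSpace X] {U : Set X} (hU : IsOpen U)
    {x y : X} (hx : x ∈ U) (h : sle x y) : y ∈ U := by
  rcases mem_closure_iff.1 h U hU hx with ⟨z, hzU, hz⟩
  rcases hz with rfl
  exact hzU

lemma directed_irreducible' {X : Type u} [TopologicalSpace X] {D : Set X}
    (hne : D.Nonempty) (hD : sDirectedOn D) : IsIrreducible D := by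
  refine ⟨hne, fun U V hU hV hU' hV' => ?_⟩
  obtain ⟨a, haD, haU⟩ := hU'
  obtain ⟨b, hbD, hbV⟩ := hV'
  obtain ⟨c, hcD, hac, hbc⟩ := hD a haD b hbD
  exact ⟨c, hcD, open_mem_of_sle' hU haU hac, open_mem_of_sle' hV hbV hbc⟩

lemma sWayBelow_mono' {X : Type u} [TopologicalSpace X] {d e y : X}
    (hde : sle d e) (h : sWayBelow e y) : sWayBelow d y := by
  intro D hne hdir s hlub hys
  obtain ⟨d', hd'D, hed'⟩ := h D hne hdir s hlub hys
  exact ⟨d', hd'D, sle_trans' hde hed'⟩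

/-- In a DI T0 space, `≪_I` coincides with the way-below relation of the specialisation
poset; consequently `X` is I-continuous iff its specialisation poset is continuous. -/
theorem stmt19 {X : Type u} [TopologicalSpace X] [T0Space X] (hDI : DISpace X) :
    (∀ x y : X, IBelow x y ↔ sWayBelow x y) ∧
    (IContinuous X ↔
      ∀ y : X, ({x : X | sWayBelow x y}.Nonempty ∧ sDirectedOn {x : X | sWayBelow x y}) ∧
        sIsLUB {x : X | sWayBelow x y} y) := by
  have key : ∀ x y : X, IBelow x y ↔ sWayBelow x y := by
    intro x y
    constructor
    · intro h D hne hdir s hlub hys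
      exact h D (directed_irreducible' hne hdir) s hlub hys
    · intro h E hE s hlub hys
      obtain ⟨D, hne, hdir, hsub, hDlub⟩ := hDI E hE s hlub
      obtain ⟨d, hdD, hxd⟩ := h D hne hdir s hDlub hys
      obtain ⟨e, heE, hde⟩ := hsub d hdD
      exact ⟨e, heE, sle_trans' hxd hde⟩
  refine ⟨key, ?_⟩
  have hset : ∀ y : X, {x : X | IBelow x y} = {x : X | sWayBelow x y} := by
    intro y; ext x; exact key x y
  constructor
  · intro hIC y
    obtain ⟨hirr, hlub⟩ := hIC y
    rw [hset y] at hirr hlub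
    refine ⟨⟨hirr.1, ?_⟩, hlub⟩
    intro a ha b hb
    obtain ⟨D, hne, hdir, hsub, hDlub⟩ := hDI _ hirr y hlub
    obtain ⟨d₁, hd₁, had₁⟩ := ha D hne hdir y hDlub (sle_refl' y)
    obtain ⟨d₂, hd₂, hbd₂⟩ := hb D hne hdir y hDlub (sle_refl' y)
    obtain ⟨c, hcD, h1c, h2c⟩ := hdir d₁ hd₁ d₂ hd₂
    obtain ⟨e, heS, hce⟩ := hsub c hcD
    refine ⟨c, sWayBelow_mono' hce heS, sle_trans' had₁ h1c, sle_trans' hbd₂ h2c⟩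
  · intro h y
    obtain ⟨⟨hne, hdir⟩, hlub⟩ := h y
    rw [hset y]
    exact ⟨directed_irreducible' hne hdir, hlub⟩
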